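/- Let X, Y be permutationally invariant operators on H^{⊗N} with Tr[X ρ^{⊗N}] = Tr[Y ρ^{⊗N}] for every density operator ρ on H. Then X = Y. -/

import Mathlib

open Matrix BigOperators Finset
open scoped ComplexOrder

/-- N-fold tensor power of a matrix (operator on H^{⊗N} with H = ℂ^d). -/
def tensorPow {d N : ℕ} (ρ : Matrix (Fin d) (Fin d) ℂ) :
    Matrix (Fin N → Fin d) (Fin N → Fin d) ℂ :=
  Matrix.of fun f g => ∏ i, ρ (f i) (g i)

/-- Conjugation Π_σ X Π_σ† of an operator on H^{⊗N} by the unitary permuting tensor factors. -/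
def permAction {d N : ℕ} (σ : Equiv.Perm (Fin N))
    (X : Matrix (Fin N → Fin d) (Fin N → Fin d) ℂ) :
    Matrix (Fin N → Fin d) (Fin N → Fin d) ℂ :=
  Matrix.of fun f g => X (f ∘ σ) (g ∘ σ)

/-- Density operator: positive semidefinite with unit trace. -/
def IsDensity {d : ℕ} (ρ : Matrix (Fin d) (Fin d) ℂ) : Prop :=
  ρ.PosSemidef ∧ ρ.trace = 1

/-- A^{(k)} = I^{⊗(k-1)} ⊗ A ⊗ I^{⊗(N-k)}, the observable A acting on the k-th factor. -/
noncomputable def siteOp {d N : ℕ} (k : Fin N) (A : Matrix (Fin d) (Fin d) ℂ) :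
    Matrix (Fin N → Fin d) (Fin N → Fin d) ℂ :=
  Matrix.of fun f g => A (f k) (g k) * ∏ i ∈ Finset.univ.erase k, (if f i = g i then (1 : ℂ) else 0)

/-- Matrix element ⟨ψ₁|⊗⋯⊗⟨ψ_N| X |φ₁⟩⊗⋯⊗|φ_N⟩ on product vectors. -/
noncomputable def prodElem {d N : ℕ} (X : Matrix (Fin N → Fin d) (Fin N → Fin d) ℂ)
    (ψ φ : Fin N → Fin d → ℂ) : ℂ :=
  ∑ f : Fin N → Fin d, ∑ g : Fin N → Fin d,
    (starRingEnd ℂ) (∏ i, ψ i (f i)) * X f g * ∏ i, φ i (g i)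

namespace PermInvAux

variable {d N : ℕ}

def entryLM (a b : Fin d) : Matrix (Fin d) (Fin d) ℂ →ₗ[ℂ] ℂ where
  toFun M := M a b
  map_add' _ _ := rfl
  map_smul' _ _ := rfl

noncomputable def Tmap (Z : Matrix (Fin N → Fin d) (Fin N → Fin d) ℂ) :
    MultilinearMap ℂ (fun _ : Fin N => Matrix (Fin d) (Fin d) ℂ) ℂ :=
  ∑ p : (Fin N → Fin d) × (Fin N → Fin d),
    Z p.1 p.2 • (MultilinearMap.mkPiAlgebra ℂ (Fin N) ℂ).compLinearMap
      (fun i => entryLM (p.2 i) (p.1 i))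

lemma Tmap_apply (Z : Matrix (Fin N → Fin d) (Fin N → Fin d) ℂ)
    (A : Fin N → Matrix (Fin d) (Fin d) ℂ) :
    Tmap Z A = ∑ p : (Fin N → Fin d) × (Fin N → Fin d),
      Z p.1 p.2 * ∏ i, A i (p.2 i) (p.1 i) := by
  simp [Tmap, MultilinearMap.sum_apply, MultilinearMap.smul_apply,
    MultilinearMap.compLinearMap_apply, MultilinearMap.mkPiAlgebra_apply, entryLM,
    smul_eq_mul]
  rfl

lemma trace_eq (Z : Matrix (Fin N → Fin d) (Fin N → Fin d) ℂ)
    (ρ : Matrix (Fin d) (Fin d) ℂ) :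
    (Z * tensorPow ρ).trace = Tmap Z (fun _ => ρ) := by
  rw [Tmap_apply]
  rw [Matrix.trace]
  simp only [Matrix.diag, Matrix.mul_apply, tensorPow, Matrix.of_apply]
  rw [← Finset.sum_product']
  rfl

lemma Tmap_perm (Z : Matrix (Fin N → Fin d) (Fin N → Fin d) ℂ)
    (hZ : ∀ σ : Equiv.Perm (Fin N), permAction σ Z = Z)
    (σ : Equiv.Perm (Fin N)) (A : Fin N → Matrix (Fin d) (Fin d) ℂ) :
    Tmap Z (fun i => A (σ i)) = Tmap Z A := by
  rw [Tmap_apply, Tmap_apply]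
  refine Fintype.sum_equiv
    (Equiv.prodCongr (Equiv.arrowCongr σ (Equiv.refl _)) (Equiv.arrowCongr σ (Equiv.refl _)))
    _ _ ?_
  intro p
  simp only [Equiv.prodCongr_apply, Prod.map, Equiv.arrowCongr_apply, Equiv.refl_symm,
    Equiv.coe_refl, Function.comp_id, Function.comp]
  have key : ∀ f g : Fin N → Fin d, Z (f ∘ σ) (g ∘ σ) = Z f g :=
    fun f g => congrFun (congrFun (hZ σ) f) g
  have h1 : Z (fun x => p.1 (σ.symm x)) (fun x => p.2 (σ.symm x)) = Z p.1 p.2 := by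
    have := key (fun x => p.1 (σ.symm x)) (fun x => p.2 (σ.symm x))
    have h := this.symm
    simp only [Function.comp_def, Equiv.symm_apply_apply] at h
    exact h
  have h2 : (∏ x, A x (p.2 (σ.symm x)) (p.1 (σ.symm x))) = ∏ i, A (σ i) (p.2 i) (p.1 i) := by
    rw [← Equiv.prod_comp σ (fun x => A x (p.2 (σ.symm x)) (p.1 (σ.symm x)))]
    simp
  rw [show ((Equiv.arrowCongr σ (Equiv.refl (Fin d))) p.1) = fun x => p.1 (σ.symm x) from rfl,
    show ((Equiv.arrowCongr σ (Equiv.refl (Fin d))) p.2) = fun x => p.2 (σ.symm x) from rfl,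
    h1]
  simp only [id]
  rw [h2]

lemma alt_sum (R : Finset (Fin N)) :
    ∑ S ∈ (Finset.univ : Finset (Fin N)).powerset,
      (if R ⊆ S then ((-1:ℂ))^(N - S.card) else 0)
      = if R = Finset.univ then 1 else 0 := by
  classical
  rw [Finset.sum_ite, Finset.sum_const_zero, add_zero]
  have e1 : (Finset.univ : Finset (Fin N)).powerset.filter (fun S => R ⊆ S)
      = (Rᶜ.powerset).image (fun U => R ∪ U) := by
    ext S
    simp only [Finset.mem_filter, Finset.mem_powerset, Finset.mem_image]
    constructor
    · rintro ⟨-, hRS⟩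
      refine ⟨S \ R, fun x hx => ?_, by rw [Finset.union_sdiff_of_subset hRS]⟩
      rw [Finset.mem_sdiff] at hx
      simp [Finset.mem_compl, hx.2]
    · rintro ⟨U, hU, rfl⟩
      exact ⟨Finset.subset_univ _, Finset.subset_union_left⟩
  rw [e1, Finset.sum_image]
  · have hcard : ∀ U ∈ Rᶜ.powerset, N - (R ∪ U).card = Rᶜ.card - U.card := by
      intro U hU
      rw [Finset.mem_powerset] at hU
      have hdisj : Disjoint R U := disjoint_compl_right.mono_right (le_of_eq rfl |>.trans hU)
      rw [Finset.card_union_of_disjoint hdisj]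
      have h1 : R.card + Rᶜ.card = N := by
        simpa using Finset.card_add_card_compl R
      have h2 : U.card ≤ Rᶜ.card := Finset.card_le_card hU
      omega
    calc ∑ U ∈ Rᶜ.powerset, ((-1:ℂ))^(N - (R ∪ U).card)
        = ∑ U ∈ Rᶜ.powerset, ((-1:ℂ))^(Rᶜ.card - U.card) := by
          exact Finset.sum_congr rfl fun U hU => by rw [hcard U hU]
      _ = ∑ U ∈ Rᶜ.powerset, ((-1:ℂ))^(U.card) := by
          refine Finset.sum_nbij' (fun U => Rᶜ \ U) (fun U => Rᶜ \ U) ?_ ?_ ?_ ?_ ?_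
          · intro U hU; simp
          · intro U hU; simp
          · intro U hU; rw [Finset.mem_powerset] at hU
            exact Finset.sdiff_sdiff_eq_self hU
          · intro U hU; rw [Finset.mem_powerset] at hU
            exact Finset.sdiff_sdiff_eq_self hU
          · intro U hU; rw [Finset.mem_powerset] at hU
            rw [Finset.card_sdiff_of_subset hU]
      _ = ((∑ U ∈ Rᶜ.powerset, (-1:ℤ)^(U.card) : ℤ) : ℂ) := by push_cast; rfl
      _ = if R = Finset.univ then 1 else 0 := by
          rw [Finset.sum_powerset_neg_one_pow_card]
          by_cases hR : R = Finset.univ <;> simp [hR, Finset.compl_eq_empty_iff]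
  · intro U hU V hV hUV
    rw [Finset.mem_coe, Finset.mem_powerset] at hU hV
    have h1 := Finset.union_sdiff_cancel_left (disjoint_compl_right.mono_right hU)
    have h2 := Finset.union_sdiff_cancel_left (disjoint_compl_right.mono_right hV)
    rw [← h1, ← h2, show R ∪ U = R ∪ V from hUV]

lemma polarization (T : MultilinearMap ℂ (fun _ : Fin N => Matrix (Fin d) (Fin d) ℂ) ℂ)
    (hsym : ∀ (σ : Equiv.Perm (Fin N)) A, T (fun i => A (σ i)) = T A)
    (hdiag : ∀ ρ : Matrix (Fin d) (Fin d) ℂ, ρ.PosSemidef → T (fun _ => ρ) = 0)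
    (A : Fin N → Matrix (Fin d) (Fin d) ℂ) (hA : ∀ i, (A i).PosSemidef) :
    T A = 0 := by
  classical
  have hzero : ∑ S ∈ (Finset.univ : Finset (Fin N)).powerset,
      ((-1:ℂ))^(N - S.card) * T (fun _ => ∑ j ∈ S, A j) = 0 := by
    refine Finset.sum_eq_zero fun S _ => ?_
    rw [hdiag _ ?_, mul_zero]
    exact Finset.sum_induction A Matrix.PosSemidef
      (fun a b ha hb => ha.add hb) Matrix.PosSemidef.zero (fun i _ => hA i)
  have hexp : ∀ S : Finset (Fin N), T (fun _ => ∑ j ∈ S, A j)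
      = ∑ r : Fin N → Fin N, (if ∀ i, r i ∈ S then T (fun i => A (r i)) else 0) := by
    intro S
    rw [T.map_sum_finset (fun _ j => A j) (fun _ => S)]
    rw [← Finset.sum_filter]
    refine Finset.sum_congr ?_ (fun _ _ => rfl)
    ext r
    simp [Fintype.mem_piFinset]
  have key : ∑ S ∈ (Finset.univ : Finset (Fin N)).powerset,
      ((-1:ℂ))^(N - S.card) * T (fun _ => ∑ j ∈ S, A j)
      = ∑ r : Fin N → Fin N,
          (if Function.Surjective r then (1:ℂ) else 0) * T (fun i => A (r i)) := by
    calc ∑ S ∈ (Finset.univ : Finset (Fin N)).powerset,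
        ((-1:ℂ))^(N - S.card) * T (fun _ => ∑ j ∈ S, A j)
        = ∑ S ∈ (Finset.univ : Finset (Fin N)).powerset, ∑ r : Fin N → Fin N,
            (if ∀ i, r i ∈ S then ((-1:ℂ))^(N - S.card) else 0) * T (fun i => A (r i)) := by
          refine Finset.sum_congr rfl fun S _ => ?_
          rw [hexp S, Finset.mul_sum]
          refine Finset.sum_congr rfl fun r _ => ?_
          rw [ite_mul, zero_mul, mul_ite, mul_zero]
      _ = ∑ r : Fin N → Fin N, (∑ S ∈ (Finset.univ : Finset (Fin N)).powerset,
            (if ∀ i, r i ∈ S then ((-1:ℂ))^(N - S.card) else 0)) * T (fun i => A (r i)) := by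
          rw [Finset.sum_comm]
          exact Finset.sum_congr rfl fun r _ => (Finset.sum_mul _ _ _).symm
      _ = ∑ r : Fin N → Fin N,
            (if Function.Surjective r then (1:ℂ) else 0) * T (fun i => A (r i)) := by
          refine Finset.sum_congr rfl fun r _ => ?_
          congr 1
          have hc : ∀ S : Finset (Fin N), (∀ i, r i ∈ S) ↔ Finset.image r Finset.univ ⊆ S := by
            intro S
            rw [Finset.image_subset_iff]
            simp
          calc ∑ S ∈ (Finset.univ : Finset (Fin N)).powerset,
              (if ∀ i, r i ∈ S then ((-1:ℂ))^(N - S.card) else 0)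
              = ∑ S ∈ (Finset.univ : Finset (Fin N)).powerset,
                (if Finset.image r Finset.univ ⊆ S then ((-1:ℂ))^(N - S.card) else 0) := by
                exact Finset.sum_congr rfl fun S _ => by rw [if_congr (hc S) rfl rfl]
            _ = if Finset.image r Finset.univ = Finset.univ then 1 else 0 := alt_sum _
            _ = if Function.Surjective r then (1:ℂ) else 0 := by
                congr 1
                simp only [eq_iff_iff]
                constructor
                · intro he y
                  have : y ∈ Finset.image r Finset.univ := by
                    rw [he]; exact Finset.mem_univ y
                  simpa using this
                · intro hs
                  apply Finset.eq_univ_of_forall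
                  intro y
                  obtain ⟨x, hx⟩ := hs y
                  exact Finset.mem_image.mpr ⟨x, Finset.mem_univ x, hx⟩
  rw [key] at hzero
  have hsumperm : ∑ r : Fin N → Fin N,
      (if Function.Surjective r then (1:ℂ) else 0) * T (fun i => A (r i))
      = (N.factorial : ℂ) * T A := by
    have h1 : ∑ r : Fin N → Fin N, (if Function.Surjective r then (1:ℂ) else 0) * T (fun i => A (r i))
        = ∑ r ∈ Finset.univ.filter (fun r : Fin N → Fin N => Function.Surjective r),
            T (fun i => A (r i)) := by
      rw [Finset.sum_filter]
      exact Finset.sum_congr rfl fun r _ => by split_ifs <;> simp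
    rw [h1]
    have h2 : ∑ r ∈ Finset.univ.filter (fun r : Fin N → Fin N => Function.Surjective r),
          T (fun i => A (r i))
        = ∑ σ : Equiv.Perm (Fin N), T (fun i => A (σ i)) := by
      refine (Finset.sum_bij' (fun (σ : Equiv.Perm (Fin N)) (_ : σ ∈ Finset.univ) => (⇑σ : Fin N → Fin N))
        (fun r hr => Equiv.ofBijective r (Finite.surjective_iff_bijective.mp (by simpa using hr)))
        ?_ ?_ ?_ ?_ ?_).symm
      · intro σ _; simp [Equiv.surjective σ]
      · intro r hr; simp
      · intro σ _; exact Equiv.ext fun x => rfl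
      · intro r hr; rfl
      · intro σ _; rfl
    rw [h2]
    rw [Finset.sum_congr rfl (fun σ _ => hsym σ A), Finset.sum_const, Finset.card_univ,
      Fintype.card_perm]
    simp [nsmul_eq_mul]
  rw [hsumperm] at hzero
  have : (N.factorial : ℂ) ≠ 0 := Nat.cast_ne_zero.mpr (Nat.factorial_ne_zero N)
  exact (mul_eq_zero.mp hzero).resolve_left this

def ketbra (v : Fin d → ℂ) : Matrix (Fin d) (Fin d) ℂ :=
  Matrix.of fun a b => v a * (starRingEnd ℂ) (v b)

lemma ketbra_posSemidef (v : Fin d → ℂ) : (ketbra v).PosSemidef := by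
  rw [Matrix.posSemidef_iff_dotProduct_mulVec]
  constructor
  · ext a b
    simp [ketbra, Matrix.conjTranspose_apply, mul_comm]
  · intro x
    have hval : dotProduct (star x) ((ketbra v) *ᵥ x)
        = (starRingEnd ℂ) (∑ b, (starRingEnd ℂ) (x b) * v b) * (∑ b, (starRingEnd ℂ) (x b) * v b) := by
      calc dotProduct (star x) ((ketbra v) *ᵥ x)
          = ∑ a, ∑ b, (starRingEnd ℂ) (x a) * (v a * (starRingEnd ℂ) (v b) * x b) := by
            simp only [dotProduct, Matrix.mulVec, ketbra, Matrix.of_apply, Pi.star_apply,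
              Complex.star_def]
            exact Finset.sum_congr rfl fun a _ => Finset.mul_sum _ _ _
        _ = ∑ b, ∑ a, (starRingEnd ℂ) (x a) * (v a * (starRingEnd ℂ) (v b) * x b) :=
            Finset.sum_comm
        _ = (starRingEnd ℂ) (∑ b, (starRingEnd ℂ) (x b) * v b)
              * (∑ b, (starRingEnd ℂ) (x b) * v b) := by
            rw [_root_.map_sum, Finset.sum_mul_sum]
            refine Finset.sum_congr rfl fun b _ => Finset.sum_congr rfl fun a _ => ?_
            simp only [_root_.map_mul, Complex.conj_conj]
            ring
    rw [hval]
    exact star_mul_self_nonneg _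
def eVec (a b : Fin d) (k : Fin 4) : Fin d → ℂ :=
  fun x => (if x = a then 1 else 0) + Complex.I ^ (k:ℕ) * (if x = b then 1 else 0)

lemma eMat_decomp (a b : Fin d) :
    (Matrix.of fun x y => (if x = a then (1:ℂ) else 0) * (if y = b then 1 else 0))
    = ∑ k : Fin 4, ((Complex.I ^ (k:ℕ)) / 4) • ketbra (eVec a b k) := by
  have h0 : ((0:Fin 4):ℕ) = 0 := rfl
  have h1 : ((1:Fin 4):ℕ) = 1 := rfl
  have h2 : ((2:Fin 4):ℕ) = 2 := rfl
  have h3 : ((3:Fin 4):ℕ) = 3 := rfl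
  have hI2 : Complex.I ^ 2 = -1 := Complex.I_sq
  have hI3 : Complex.I ^ 3 = -Complex.I := by
    rw [pow_succ, hI2]; ring
  rcases eq_or_ne a b with hab | hab
  · subst hab
    ext x y
    simp only [Matrix.sum_apply, Matrix.smul_apply, ketbra, Matrix.of_apply, eVec, smul_eq_mul,
      Fin.sum_univ_four, h0, h1, h2, h3, pow_zero, pow_one, hI2, hI3]
    by_cases hxa : x = a <;> by_cases hya : y = a <;>
      simp [hxa, hya, Complex.conj_I] <;> ring
  · ext x y
    simp only [Matrix.sum_apply, Matrix.smul_apply, ketbra, Matrix.of_apply, eVec, smul_eq_mul,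
      Fin.sum_univ_four, h0, h1, h2, h3, pow_zero, pow_one, hI2, hI3]
    by_cases hxa : x = a <;> by_cases hxb : x = b <;> by_cases hya : y = a <;> by_cases hyb : y = b <;>
      first
        | (exfalso; exact hab (by rw [← hxa, hxb]))
        | (exfalso; exact hab (by rw [← hya, hyb]))
        | (simp [hxa, hxb, hya, hyb, hab, Ne.symm hab, Complex.conj_I, hI2, hI3] <;>
            ring_nf <;> simp [Complex.I_sq] <;> ring)

lemma psd_diag_nonneg {ρ : Matrix (Fin d) (Fin d) ℂ} (hρ : ρ.PosSemidef) (a : Fin d) :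
    0 ≤ ρ a a := by
  have h := hρ.dotProduct_mulVec_nonneg (Pi.single a 1)
  have hval : dotProduct (star (Pi.single a 1)) (ρ *ᵥ (Pi.single a (1:ℂ))) = ρ a a := by
    simp [dotProduct, Matrix.mulVec, Pi.single_apply, apply_ite]
  rwa [hval] at h

lemma psd_trace_zero {ρ : Matrix (Fin d) (Fin d) ℂ} (hρ : ρ.PosSemidef) (ht : ρ.trace = 0) :
    ρ = 0 := by
  have hdiag : ∀ a, ρ a a = 0 := by
    have hsum : ∑ a, ρ a a = 0 := ht
    have := (Finset.sum_eq_zero_iff_of_nonneg (fun a _ => psd_diag_nonneg hρ a)).mp hsum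
    exact fun a => this a (Finset.mem_univ a)
  have hcol : ∀ a, ρ *ᵥ Pi.single a (1:ℂ) = 0 := by
    intro a
    apply (hρ.dotProduct_mulVec_zero_iff (Pi.single a 1)).mp
    have hval : dotProduct (star (Pi.single a 1)) (ρ *ᵥ (Pi.single a (1:ℂ))) = ρ a a := by
      simp [dotProduct, Matrix.mulVec, Pi.single_apply, apply_ite]
    rw [hval, hdiag]
  ext i j
  have := congrFun (hcol j) i
  simpa [Matrix.mulVec, dotProduct, Pi.single_apply, apply_ite] using this

lemma Tmap_psd_zero (Z : Matrix (Fin N → Fin d) (Fin N → Fin d) ℂ) (hN : 0 < N)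
    (hq : ∀ ρ : Matrix (Fin d) (Fin d) ℂ, ρ.PosSemidef ∧ ρ.trace = 1 →
      Tmap Z (fun _ => ρ) = 0)
    {ρ : Matrix (Fin d) (Fin d) ℂ} (hρ : ρ.PosSemidef) :
    Tmap Z (fun _ => ρ) = 0 := by
  by_cases ht : ρ.trace = 0
  · rw [psd_trace_zero hρ ht]
    exact (Tmap Z).map_coord_zero (⟨0, hN⟩ : Fin N) rfl
  · set t := ρ.trace with htdef
    have h0 : 0 ≤ t := by
      rw [htdef, Matrix.trace]
      exact Finset.sum_nonneg fun a _ => psd_diag_nonneg hρ a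
    obtain ⟨hre, him⟩ := Complex.nonneg_iff.mp h0
    have htre : t = ((t.re : ℝ) : ℂ) := by
      exact Complex.ext rfl him.symm
    have hinv : t⁻¹ = ((t.re⁻¹ : ℝ) : ℂ) := by
      rw [htre, ← Complex.ofReal_inv]
      norm_num
    have hinv_nonneg : 0 ≤ t⁻¹ := by
      rw [hinv]
      exact Complex.zero_le_real.mpr (inv_nonneg.mpr hre)
    have hρ' : (t⁻¹ • ρ).PosSemidef := by
      rw [Matrix.posSemidef_iff_dotProduct_mulVec]
      constructor
      · have hH := hρ.1
        rw [Matrix.IsHermitian, Matrix.conjTranspose_smul, hH]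
        congr 1
        rw [hinv, Complex.star_def, Complex.conj_ofReal]
      · intro x
        rw [Matrix.smul_mulVec, dotProduct_smul, smul_eq_mul]
        exact mul_nonneg hinv_nonneg (hρ.dotProduct_mulVec_nonneg x)
    have htr' : (t⁻¹ • ρ).trace = 1 := by
      rw [Matrix.trace_smul, smul_eq_mul, ← htdef, inv_mul_cancel₀ ht]
    have hzero := hq _ ⟨hρ', htr'⟩
    have hrec : ρ = t • (t⁻¹ • ρ) := by
      rw [smul_smul, mul_inv_cancel₀ ht, one_smul]
    calc Tmap Z (fun _ => ρ) = Tmap Z (fun _ => t • (t⁻¹ • ρ)) := by rw [← hrec]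
      _ = (∏ _i : Fin N, t) • Tmap Z (fun _ => t⁻¹ • ρ) :=
          (Tmap Z).map_smul_univ (fun _ => t) (fun _ => t⁻¹ • ρ)
      _ = 0 := by rw [hzero, smul_zero]

lemma Z_eq_zero (Z : Matrix (Fin N → Fin d) (Fin N → Fin d) ℂ)
    (hvanish : ∀ A : Fin N → Matrix (Fin d) (Fin d) ℂ,
      (∀ i, (A i).PosSemidef) → Tmap Z A = 0) :
    Z = 0 := by
  ext f g
  have h1 : Tmap Z (fun i => Matrix.of fun x y =>
      (if x = g i then (1:ℂ) else 0) * (if y = f i then 1 else 0)) = Z f g := by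
    rw [Tmap_apply]
    rw [Finset.sum_eq_single (f, g)]
    · simp
    · intro p _ hp
      have hne : p.1 ≠ f ∨ p.2 ≠ g := by
        by_contra hc
        push_neg at hc
        exact hp (Prod.ext hc.1 hc.2)
      have hzero : (∏ i, (Matrix.of fun x y =>
          (if x = g i then (1:ℂ) else 0) * (if y = f i then 1 else 0)) (p.2 i) (p.1 i)) = 0 := by
        rcases hne with hn | hn
        · obtain ⟨i, hi⟩ := Function.ne_iff.mp hn
          refine Finset.prod_eq_zero (Finset.mem_univ i) ?_
          simp [hi]
        · obtain ⟨i, hi⟩ := Function.ne_iff.mp hn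
          refine Finset.prod_eq_zero (Finset.mem_univ i) ?_
          simp [hi]
      rw [hzero, mul_zero]
    · intro hmem
      exact absurd (Finset.mem_univ _) hmem
  rw [← h1]
  have hfun : (fun i => Matrix.of fun x y =>
      (if x = g i then (1:ℂ) else 0) * (if y = f i then 1 else 0))
      = fun i => ∑ k : Fin 4, ((Complex.I ^ (k:ℕ)) / 4) • ketbra (eVec (g i) (f i) k) :=
    funext fun i => eMat_decomp (g i) (f i)
  rw [hfun, (Tmap Z).map_sum]
  refine Finset.sum_eq_zero fun r _ => ?_
  rw [(Tmap Z).map_smul_univ (fun i => (Complex.I ^ (r i : ℕ))/4)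
    (fun i => ketbra (eVec (g i) (f i) (r i))),
    hvanish _ (fun i => ketbra_posSemidef _), smul_zero]

end PermInvAux

/-- Two permutationally invariant operators with the same ensemble averages
on all product states ρ^{⊗N} coincide. -/
theorem perm_invariant_eq_of_averages_eq
    {d N : ℕ} (hN : 0 < N)
    (X Y : Matrix (Fin N → Fin d) (Fin N → Fin d) ℂ)
    (hinvX : ∀ σ : Equiv.Perm (Fin N), permAction σ X = X)
    (hinvY : ∀ σ : Equiv.Perm (Fin N), permAction σ Y = Y)
    (h : ∀ ρ : Matrix (Fin d) (Fin d) ℂ, IsDensity ρ →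
      (X * tensorPow ρ).trace = (Y * tensorPow ρ).trace) :
    X = Y := by
  have hZinv : ∀ σ : Equiv.Perm (Fin N), permAction σ (X - Y) = X - Y := by
    intro σ
    have hsplit : permAction σ (X - Y) = permAction σ X - permAction σ Y := by
      ext f g
      simp [permAction, Matrix.sub_apply]
    rw [hsplit, hinvX, hinvY]
  have hq : ∀ ρ : Matrix (Fin d) (Fin d) ℂ, ρ.PosSemidef ∧ ρ.trace = 1 →
      PermInvAux.Tmap (X - Y) (fun _ => ρ) = 0 := by
    intro ρ hρ
    rw [← PermInvAux.trace_eq, Matrix.sub_mul, Matrix.trace_sub, h ρ hρ, sub_self]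
  have hpsd : ∀ ρ : Matrix (Fin d) (Fin d) ℂ, ρ.PosSemidef →
      PermInvAux.Tmap (X - Y) (fun _ => ρ) = 0 :=
    fun ρ hρ => PermInvAux.Tmap_psd_zero (X - Y) hN hq hρ
  have hvanish : ∀ A : Fin N → Matrix (Fin d) (Fin d) ℂ,
      (∀ i, (A i).PosSemidef) → PermInvAux.Tmap (X - Y) A = 0 :=
    fun A hA => PermInvAux.polarization _
      (fun σ A => PermInvAux.Tmap_perm _ hZinv σ A) hpsd A hA
  have hZ : X - Y = 0 := PermInvAux.Z_eq_zero _ hvanish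
  exact sub_eq_zero.mp hZ
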